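/- Blanket Lemma: Let μ be a positive Borel measure on ℂ, and b(x,y) a kernel with |b(x,y)| ≤ 1/|x−y|. Define (b*f)(x) := sup_{r>0} |∫_{|y−x|>r} b(x,y) f(y) dμ(y)| and (M_{1,R} f)(x) := sup_{r>R} (1/r) ∫_{B(x,r)} |f| dμ. Then for every R > 0 and every decreasing function φ: [0,∞) → [0,1], one has |∫_{|y−x|>R} b(x,y) φ(|x−y|) f(y) dμ(y)| ≤ 2 (b*f)(x) + 2 (M_{1,R} f)(x). -/

import Mathlib

open MeasureTheory Metric Set Filter

lemma blanket_aux {E : Type*} [NormedAddCommGroup E] [NormedSpace ℝ E] [CompleteSpace E]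
    {a : ℝ} (h0 : 0 ≤ a) (h1 : a ≤ 1) (c : E) :
    (∫ s in Set.Ioo (0:ℝ) 1, ({p : ℝ | p < a}).indicator (fun _ => c) s) = a • c := by
  have hs : {p : ℝ | p < a} = Set.Iio a := rfl
  rw [hs, integral_indicator measurableSet_Iio,
    Measure.restrict_restrict measurableSet_Iio]
  have h2 : Set.Iio a ∩ Set.Ioo (0:ℝ) 1 = Set.Ioo 0 a := by
    ext t
    simp only [Set.mem_inter_iff, Set.mem_Iio, Set.mem_Ioo]
    exact ⟨fun ⟨h, h2, h3⟩ => ⟨h2, h⟩, fun ⟨h2, h⟩ => ⟨h, h2, lt_of_lt_of_le h h1⟩⟩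
  rw [h2, setIntegral_const, measureReal_def, Real.volume_Ioo, ENNReal.toReal_ofReal (by linarith)]
  simp

theorem blanket_lemma
    (μ : Measure ℂ) (b : ℂ → ℂ → ℂ) (f : ℂ → ℂ) (x : ℂ)
    (hb : ∀ z y : ℂ, z ≠ y → ‖b z y‖ ≤ 1 / ‖z - y‖)
    (φ : ℝ → ℝ) (hφanti : Antitone φ) (hφ0 : ∀ t, 0 ≤ φ t) (hφ1 : ∀ t, φ t ≤ 1)
    (R : ℝ) (hR : 0 < R)
    (hint : ∀ r > (0:ℝ), IntegrableOn (fun y => b x y * f y) {y : ℂ | r < dist y x} μ)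
    (hintφ : IntegrableOn (fun y => b x y * φ (dist x y) * f y) {y : ℂ | R < dist y x} μ)
    (Bstar : ℝ)
    (hBstar : ∀ r > (0:ℝ), ‖∫ y in {y : ℂ | r < dist y x}, b x y * f y ∂μ‖ ≤ Bstar)
    (Mf : ℝ)
    (hMf : ∀ r > R, (∫ y in closedBall x r, ‖f y‖ ∂μ) / r ≤ Mf) :
    ‖∫ y in {y : ℂ | R < dist y x}, b x y * φ (dist x y) * f y ∂μ‖ ≤
      2 * Bstar + 2 * Mf := by
  classical
  set g : ℂ → ℂ := fun y => b x y * f y with hg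
  have hBnn : 0 ≤ Bstar := le_trans (norm_nonneg _) (hBstar R hR)
  have hMnn : 0 ≤ Mf := by
    have h1 := hMf (R + 1) (by linarith)
    have h2 : 0 ≤ (∫ y in closedBall x (R + 1), ‖f y‖ ∂μ) / (R + 1) :=
      div_nonneg (integral_nonneg fun y => norm_nonneg _) (by linarith)
    linarith
  have hφm : Measurable φ := hφanti.measurable
  have hSmeas : ∀ r : ℝ, MeasurableSet {y : ℂ | r < dist y x} := fun r =>
    (isOpen_lt continuous_const (continuous_id.dist continuous_const)).measurableSet
  have hCmeas : ∀ r : ℝ, MeasurableSet {y : ℂ | r ≤ dist y x} := fun r =>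
    (isClosed_le continuous_const (continuous_id.dist continuous_const)).measurableSet
  have hgi : IntegrableOn g {y : ℂ | R < dist y x} μ := hint R hR
  set μ' := μ.restrict {y : ℂ | R < dist y x} with hμ'
  have hgi' : Integrable g μ' := hgi
  have hH : Integrable (fun y => b x y * (φ (dist x y) : ℂ) * f y) μ' := hintφ
  -- integrals over closed exterior regions are limits of truncated integrals
  have hclosed : ∀ c : ℝ, R < c → ‖∫ y in {y : ℂ | c ≤ dist y x}, g y ∂μ‖ ≤ Bstar := by
    intro c hc
    set r : ℕ → ℝ := fun n => c - (c - R) / (n + 2) with hr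
    have hrR : ∀ n : ℕ, R < r n := by
      intro n
      have h1 : (c - R) / ((n : ℝ) + 2) < c - R := by
        apply div_lt_self (by linarith)
        have : (0:ℝ) ≤ (n : ℝ) := Nat.cast_nonneg n
        linarith
      simp only [hr]; linarith
    have hrc : ∀ n : ℕ, r n < c := by
      intro n
      have h1 : 0 < (c - R) / ((n : ℝ) + 2) := by
        apply div_pos (by linarith)
        positivity
      simp only [hr]; linarith
    set F : ℕ → ℂ → ℂ := fun n => ({y : ℂ | r n < dist y x}).indicator g with hF
    set Flim : ℂ → ℂ := ({y : ℂ | c ≤ dist y x}).indicator g with hFlim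
    have htends : Tendsto (fun n => ∫ y, F n y ∂μ') atTop (nhds (∫ y, Flim y ∂μ')) := by
      apply tendsto_integral_of_dominated_convergence (fun y => ‖g y‖)
      · intro n; exact hgi'.aestronglyMeasurable.indicator (hSmeas _)
      · exact hgi'.norm
      · intro n; exact Eventually.of_forall fun y => norm_indicator_le_norm_self _ _
      · apply Eventually.of_forall
        intro y
        have hev : ∀ᶠ n in atTop, F n y = Flim y := by
          by_cases hy : c ≤ dist y x
          · apply Eventually.of_forall
            intro n
            have h1 : y ∈ {y : ℂ | r n < dist y x} := lt_of_lt_of_le (hrc n) hy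
            have h2 : y ∈ {y : ℂ | c ≤ dist y x} := hy
            simp only [hF, hFlim, indicator_of_mem h1, indicator_of_mem h2]
          · push_neg at hy
            have htd : Tendsto (fun n : ℕ => (c - R) / ((n : ℝ) + 2)) atTop (nhds 0) := by
              apply Tendsto.div_atTop tendsto_const_nhds
              exact tendsto_atTop_add_const_right _ 2 tendsto_natCast_atTop_atTop
            have hev2 : ∀ᶠ n : ℕ in atTop, (c - R) / ((n : ℝ) + 2) < c - dist y x :=
              htd.eventually (eventually_lt_nhds (by linarith : (0:ℝ) < c - dist y x))
            filter_upwards [hev2] with n hn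
            have h1 : y ∉ {y : ℂ | r n < dist y x} := by
              simp only [Set.mem_setOf_eq, not_lt, hr]; linarith
            have h2 : y ∉ {y : ℂ | c ≤ dist y x} := by
              simp only [Set.mem_setOf_eq, not_le]; exact hy
            simp only [hF, hFlim, indicator_of_notMem h1, indicator_of_notMem h2]
        exact Tendsto.congr' (hev.mono fun n h => h.symm) tendsto_const_nhds
    have hFn : ∀ n, (∫ y, F n y ∂μ') = ∫ y in {y : ℂ | r n < dist y x}, g y ∂μ := by
      intro n
      have h1 : {y : ℂ | r n < dist y x} ∩ {y : ℂ | R < dist y x}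
          = {y : ℂ | r n < dist y x} :=
        Set.inter_eq_self_of_subset_left fun y hy => lt_trans (hrR n) hy
      rw [hF, integral_indicator (hSmeas _), hμ', Measure.restrict_restrict (hSmeas _), h1]
    have hFlimI : (∫ y, Flim y ∂μ') = ∫ y in {y : ℂ | c ≤ dist y x}, g y ∂μ := by
      have h1 : {y : ℂ | c ≤ dist y x} ∩ {y : ℂ | R < dist y x}
          = {y : ℂ | c ≤ dist y x} :=
        Set.inter_eq_self_of_subset_left fun y hy => lt_of_lt_of_le hc hy
      rw [hFlim, integral_indicator (hCmeas _), hμ', Measure.restrict_restrict (hCmeas _), h1]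
    rw [← hFlimI]
    refine le_of_tendsto htends.norm (Eventually.of_forall fun n => ?_)
    rw [hFn]
    exact hBstar (r n) (lt_trans hR (hrR n))
  -- the key per-level bound
  have hkey : ∀ s : ℝ, 0 < s →
      ‖∫ y in {y : ℂ | R < dist y x} ∩ {y : ℂ | s < φ (dist x y)}, g y ∂μ‖ ≤ 2 * Bstar := by
    intro s hs
    set T : Set ℂ := {y : ℂ | s < φ (dist x y)} with hT
    have hTmeas : MeasurableSet T := by
      have hm : Measurable fun y : ℂ => φ (dist x y) :=
        hφm.comp (measurable_const.dist measurable_id)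
      exact measurableSet_lt measurable_const hm
    have hsplit := integral_inter_add_diff (μ := μ) (f := g) hTmeas hgi
    have hdiff : ‖∫ y in {y : ℂ | R < dist y x} \ T, g y ∂μ‖ ≤ Bstar := by
      by_cases hallE : ∀ t, R < t → φ t ≤ s
      · have heq : {y : ℂ | R < dist y x} \ T = {y : ℂ | R < dist y x} := by
          ext y
          simp only [Set.mem_diff, hT, Set.mem_setOf_eq, and_iff_left_iff_imp]
          intro h1
          rw [dist_comm x y]
          exact not_lt.2 (hallE _ h1)
        rw [heq]; exact hBstar R hR
      · push_neg at hallE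
        obtain ⟨t₁, ht₁R, ht₁⟩ := hallE
        by_cases hall : ∀ t, R < t → s < φ t
        · have hempty : {y : ℂ | R < dist y x} \ T = ∅ := by
            ext y
            simp only [Set.mem_diff, hT, Set.mem_setOf_eq, Set.mem_empty_iff_false, iff_false,
              not_and, not_not]
            intro h1
            rw [dist_comm x y]
            exact hall _ h1
          rw [hempty]
          simpa using hBnn
        · push_neg at hall
          obtain ⟨t₀, ht₀R, ht₀⟩ := hall
          set E : Set ℝ := {t : ℝ | φ t ≤ s} with hE
          have hEne : E.Nonempty := ⟨t₀, ht₀⟩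
          have hEt₁ : ∀ e ∈ E, t₁ < e := by
            intro e he
            by_contra hle
            push_neg at hle
            exact absurd (lt_of_lt_of_le ht₁ (hφanti hle)) (not_lt.2 he)
          have hbdd : BddBelow E := ⟨t₁, fun e he => (hEt₁ e he).le⟩
          set cc := sInf E with hcc
          have hccR : R < cc := lt_of_lt_of_le ht₁R (le_csInf hEne fun e he => (hEt₁ e he).le)
          have hupper : ∀ t, cc < t → t ∈ E := by
            intro t ht
            obtain ⟨e, heE, het⟩ := exists_lt_of_csInf_lt hEne ht
            exact le_trans (hφanti het.le) heE
          by_cases hcE : cc ∈ E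
          · have heq : {y : ℂ | R < dist y x} \ T = {y : ℂ | cc ≤ dist y x} := by
              ext y
              simp only [Set.mem_diff, hT, Set.mem_setOf_eq, not_lt]
              constructor
              · rintro ⟨h1, h2⟩
                rw [dist_comm x y] at h2
                exact csInf_le hbdd h2
              · intro h1
                refine ⟨lt_of_lt_of_le hccR h1, ?_⟩
                rw [dist_comm x y]
                rcases eq_or_lt_of_le h1 with h | h
                · rw [← h]; exact hcE
                · exact hupper _ h
            rw [heq]; exact hclosed cc hccR
          · have heq : {y : ℂ | R < dist y x} \ T = {y : ℂ | cc < dist y x} := by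
              ext y
              simp only [Set.mem_diff, hT, Set.mem_setOf_eq, not_lt]
              constructor
              · rintro ⟨h1, h2⟩
                rw [dist_comm x y] at h2
                have hle : cc ≤ dist y x := csInf_le hbdd h2
                rcases eq_or_lt_of_le hle with h | h
                · exact absurd (h ▸ h2 : cc ∈ E) hcE
                · exact h
              · intro h1
                refine ⟨lt_trans hccR h1, ?_⟩
                rw [dist_comm x y]
                exact hupper _ h1
            rw [heq]; exact hBstar cc (lt_trans hR hccR)
    have heqsub : (∫ y in {y : ℂ | R < dist y x} ∩ T, g y ∂μ)
        = (∫ y in {y : ℂ | R < dist y x}, g y ∂μ)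
          - ∫ y in {y : ℂ | R < dist y x} \ T, g y ∂μ := by
      rw [← hsplit]; ring
    rw [heqsub]
    calc ‖_ - _‖ ≤ ‖∫ y in {y : ℂ | R < dist y x}, g y ∂μ‖
          + ‖∫ y in {y : ℂ | R < dist y x} \ T, g y ∂μ‖ := norm_sub_le _ _
      _ ≤ Bstar + Bstar := add_le_add (hBstar R hR) hdiff
      _ = 2 * Bstar := by ring
  -- σ-finite support
  obtain ⟨t, htm, htz, htsf⟩ := hgi'.aefinStronglyMeasurable.exists_set_sigmaFinite
  set μ'' := μ'.restrict t with hμ''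
  haveI : SigmaFinite μ'' := htsf
  have hsw : ∀ h : ℂ → ℂ, Integrable h μ' → (∀ y, g y = 0 → h y = 0) →
      (∫ y, h y ∂μ') = ∫ y, h y ∂μ'' := by
    intro h hInt hzero
    have hz2 : h =ᵐ[μ'.restrict tᶜ] 0 := by
      refine htz.mono fun y hy => ?_
      simp only [Pi.zero_apply] at hy ⊢
      exact hzero y hy
    have h0 : (∫ y in tᶜ, h y ∂μ') = 0 := by
      rw [integral_congr_ae hz2]
      simp
    have hadd := integral_add_compl htm hInt
    rw [h0, add_zero] at hadd
    exact hadd.symm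
  -- layer-cake / Fubini
  set ν := volume.restrict (Set.Ioo (0:ℝ) 1) with hν
  have hν1 : IsProbabilityMeasure ν := by
    constructor
    rw [hν, Measure.restrict_apply_univ, Real.volume_Ioo]
    norm_num
  set F : ℂ → ℝ → ℂ := fun y s => ({p : ℝ | p < φ (dist x y)}).indicator (fun _ => g y) s
    with hFdef
  have hpoint : ∀ y : ℂ, b x y * (φ (dist x y) : ℂ) * f y = ∫ s, F y s ∂ν := by
    intro y
    rw [hFdef, hν, blanket_aux (hφ0 _) (hφ1 _) (g y), hg]
    simp only [Complex.real_smul]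
    ring
  have hnormpt : ∀ y : ℂ, (∫ s, ‖F y s‖ ∂ν) = ‖b x y * (φ (dist x y) : ℂ) * f y‖ := by
    intro y
    have h1 : (fun s => ‖F y s‖)
        = fun s => ({p : ℝ | p < φ (dist x y)}).indicator (fun _ => ‖g y‖) s := by
      funext s
      rw [hFdef, norm_indicator_eq_indicator_norm]
    rw [h1, hν, blanket_aux (hφ0 _) (hφ1 _) (‖g y‖), smul_eq_mul, hg]
    simp only [norm_mul, Complex.norm_real, Real.norm_eq_abs, abs_of_nonneg (hφ0 _)]
    ring
  have hWmeas : MeasurableSet {p : ℂ × ℝ | p.2 < φ (dist x p.1)} := by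
    have hm : Measurable fun p : ℂ × ℝ => φ (dist x p.1) :=
      (hφm.comp (measurable_const.dist measurable_id)).comp measurable_fst
    exact measurableSet_lt measurable_snd hm
  have hFuncEq : Function.uncurry F
      = ({p : ℂ × ℝ | p.2 < φ (dist x p.1)}).indicator (fun p => g p.1) := by
    funext p
    rcases p with ⟨y, s⟩
    simp only [Function.uncurry, hFdef, Set.indicator_apply, Set.mem_setOf_eq]
  have hgm'' : AEStronglyMeasurable g μ'' :=
    hgi'.aestronglyMeasurable.mono_measure Measure.restrict_le_self
  have hFaesm : AEStronglyMeasurable (Function.uncurry F) (μ''.prod ν) := by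
    rw [hFuncEq]
    exact hgm''.comp_fst.indicator hWmeas
  have hFint : Integrable (Function.uncurry F) (μ''.prod ν) := by
    rw [integrable_prod_iff hFaesm]
    constructor
    · apply Eventually.of_forall
      intro y
      have he : (fun s => Function.uncurry F (y, s))
          = ({p : ℝ | p < φ (dist x y)}).indicator fun _ => g y := rfl
      rw [he]
      exact (integrable_const (g y)).indicator measurableSet_Iio
    · have h3 : (fun y' => ∫ s, ‖Function.uncurry F (y', s)‖ ∂ν)
          = fun y' => ‖b x y' * (φ (dist x y') : ℂ) * f y'‖ := funext fun y' => hnormpt y'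
      rw [h3]
      exact hH.norm.restrict
  have hswap : (∫ y, b x y * (φ (dist x y) : ℂ) * f y ∂μ')
      = ∫ s, (∫ y, F y s ∂μ'') ∂ν := by
    have h1 : (∫ y, b x y * (φ (dist x y) : ℂ) * f y ∂μ')
        = ∫ y, b x y * (φ (dist x y) : ℂ) * f y ∂μ'' := by
      refine hsw _ hH fun y hy => ?_
      have he : b x y * (φ (dist x y) : ℂ) * f y = (φ (dist x y) : ℂ) * g y := by
        rw [hg]; ring
      rw [he, hy, mul_zero]
    rw [h1]
    have h2 : (∫ y, b x y * (φ (dist x y) : ℂ) * f y ∂μ'')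
        = ∫ y, (∫ s, F y s ∂ν) ∂μ'' :=
      integral_congr_ae (Eventually.of_forall fun y => hpoint y)
    rw [h2]
    exact integral_integral_swap hFint
  rw [show (∫ y in {y : ℂ | R < dist y x}, b x y * (φ (dist x y) : ℂ) * f y ∂μ)
      = ∫ y, b x y * (φ (dist x y) : ℂ) * f y ∂μ' from rfl, hswap]
  have hbound : ∀ᵐ s ∂ν, ‖∫ y, F y s ∂μ''‖ ≤ 2 * Bstar := by
    rw [hν]
    filter_upwards [ae_restrict_mem measurableSet_Ioo] with s hs
    have hTmeas : MeasurableSet {y : ℂ | s < φ (dist x y)} := by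
      have hm : Measurable fun y : ℂ => φ (dist x y) :=
        hφm.comp (measurable_const.dist measurable_id)
      exact measurableSet_lt measurable_const hm
    have h1 : (fun y => F y s) = ({y : ℂ | s < φ (dist x y)}).indicator g := by
      funext y
      simp only [hFdef, Set.indicator_apply, Set.mem_setOf_eq]
    have h2 : (∫ y, F y s ∂μ'')
        = ∫ y in {y : ℂ | R < dist y x} ∩ {y : ℂ | s < φ (dist x y)}, g y ∂μ := by
      have h3 : (∫ y, F y s ∂μ') = ∫ y, F y s ∂μ'' := by
        refine hsw _ ?_ fun y hy => ?_
        · rw [h1]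
          exact hgi'.indicator hTmeas
        · show F y s = 0
          simp only [hFdef, Set.indicator_apply]
          split
          · exact hy
          · rfl
      rw [← h3, h1, integral_indicator hTmeas, hμ', Measure.restrict_restrict hTmeas,
        Set.inter_comm]
    rw [h2]
    exact hkey s hs.1
  calc ‖∫ s, (∫ y, F y s ∂μ'') ∂ν‖ ≤ 2 * Bstar * (ν Set.univ).toReal :=
        norm_integral_le_of_norm_le_const hbound
    _ = 2 * Bstar := by rw [hν1.measure_univ]; simp
    _ ≤ 2 * Bstar + 2 * Mf := by linarith
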